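/- Let q be a prime number and f : ℤ_q → ℤ_q a continuous function. Then there exists a unique continuous function g̃ : ℤ_q → ℤ_q such that for every natural number n, g̃(n) = ∑_{i=1}^{n} f(i) (where n and i are interpreted in ℤ_q via the canonical map ℕ → ℤ_q). -/

import Mathlib

open Finset Filter fwdDiff

instance padicInt_isBoundedSMul_padic (q : ℕ) [Fact q.Prime] : IsBoundedSMul ℤ_[q] ℚ_[q] :=
  IsBoundedSMul.of_norm_smul_le fun r x => by
    rw [Algebra.smul_def, norm_mul]
    exact le_of_eq rfl

/-- For a continuous `f : ℤ_q → ℤ_q` there is a unique continuous function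
`g̃ : ℤ_q → ℤ_q` extending the partial sums `n ↦ ∑_{i=1}^{n} f(i)`. -/
theorem padic_dependent_sum_exists_unique (q : ℕ) [Fact q.Prime]
    (f : ℤ_[q] → ℤ_[q]) (hf : Continuous f) :
    ∃! g : ℤ_[q] → ℤ_[q], Continuous g ∧
      ∀ n : ℕ, g (n : ℤ_[q]) = ∑ i ∈ Finset.Icc 1 n, f (i : ℤ_[q]) := by
  -- work in `ℚ_[q]` so we can use the Mahler-series machinery
  have hcoe : Continuous ((↑) : ℤ_[q] → ℚ_[q]) := continuous_induced_dom
  set F : C(ℤ_[q], ℚ_[q]) :=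
    ⟨fun x => ((f (x + 1) : ℤ_[q]) : ℚ_[q]),
      hcoe.comp (hf.comp (continuous_id.add continuous_const))⟩ with hF
  -- the Mahler coefficients of the indefinite sum of `f`
  set a : ℕ → ℚ_[q] := fun k => Nat.casesOn k 0 (fun n => (Δ_[1])^[n] F 0) with ha_def
  have ha : Tendsto a atTop (nhds 0) := by
    rw [← tendsto_add_atTop_iff_nat 1]
    exact PadicInt.fwdDiff_tendsto_zero F
  set G : C(ℤ_[q], ℚ_[q]) := PadicInt.mahlerSeries a with hG
  -- the partial-sum function, valued in `ℚ_[q]`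
  set T : ℕ → ℚ_[q] := fun n => ∑ i ∈ Finset.Icc 1 n, ((f (i : ℤ_[q]) : ℤ_[q]) : ℚ_[q]) with hT
  -- forward differences of `T` are the Mahler coefficients `a`
  have hTd : ∀ k : ℕ, (Δ_[1])^[k] T 0 = a k := by
    intro k
    cases k with
    | zero => simp [hT, ha_def]
    | succ n =>
      have h1 : Δ_[1] T = fun m : ℕ => ((f ((m : ℤ_[q]) + 1) : ℤ_[q]) : ℚ_[q]) := by
        funext m
        show T (m + 1) - T m = _
        rw [hT]
        simp only []
        rw [Finset.sum_Icc_succ_top (Nat.one_le_iff_ne_zero.mpr (Nat.succ_ne_zero m)),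
          add_sub_cancel_left]
        push_cast
        rfl
      have h2 : (Δ_[1])^[n + 1] T 0 = (Δ_[1])^[n] (Δ_[1] T) 0 := by
        rw [Function.iterate_succ_apply]
      rw [h2, h1]
      show _ = (Δ_[1])^[n] F 0
      rw [fwdDiff_iter_eq_sum_shift, fwdDiff_iter_eq_sum_shift]
      refine Finset.sum_congr rfl fun i _ => ?_
      congr 1
      simp [hF, nsmul_eq_mul]
  -- `G` agrees with `T` on the naturals
  have hGT : ∀ m : ℕ, G (m : ℤ_[q]) = T m := by
    intro m
    rw [hG, PadicInt.mahlerSeries_apply_nat ha (le_refl m)]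
    have := shift_eq_sum_fwdDiff_iter (1 : ℕ) T m 0
    simp only [zero_add, smul_eq_mul, mul_one] at this
    rw [this]
    exact Finset.sum_congr rfl fun k _ => by rw [hTd k]
  -- `G` takes values of norm at most 1
  have hG1 : ∀ x : ℤ_[q], ‖G x‖ ≤ 1 := by
    intro x
    have hclosed : IsClosed {y : ℤ_[q] | ‖G y‖ ≤ 1} :=
      isClosed_le (continuous_norm.comp (map_continuous G)) continuous_const
    have hsub : Set.range ((↑) : ℕ → ℤ_[q]) ⊆ {y : ℤ_[q] | ‖G y‖ ≤ 1} := by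
      rintro _ ⟨n, rfl⟩
      simp only [Set.mem_setOf_eq, hGT n, hT]
      rw [show (∑ i ∈ Finset.Icc 1 n, ((f (i : ℤ_[q]) : ℤ_[q]) : ℚ_[q]))
          = ((∑ i ∈ Finset.Icc 1 n, f (i : ℤ_[q]) : ℤ_[q]) : ℚ_[q]) by
        exact (map_sum (PadicInt.Coe.ringHom) _ _).symm]
      exact PadicInt.norm_le_one _
    have := hclosed.closure_subset_iff.mpr hsub
    rw [PadicInt.denseRange_natCast.closure_eq] at this
    exact this (Set.mem_univ x)
  -- define the desired function
  refine ⟨fun x => ⟨G x, hG1 x⟩, ⟨?_, ?_⟩, ?_⟩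
  · exact Continuous.subtype_mk (map_continuous G) _
  · intro n
    apply Subtype.ext
    show G (n : ℤ_[q]) = _
    rw [hGT n, hT]
    exact (map_sum (PadicInt.Coe.ringHom) _ _).symm
  · intro g' ⟨hg'c, hg'⟩
    refine PadicInt.denseRange_natCast.equalizer hg'c
      (Continuous.subtype_mk (map_continuous G) _) (funext fun n => ?_)
    simp only [Function.comp_apply, hg' n]
    apply Subtype.ext
    show _ = G (n : ℤ_[q])
    rw [hGT n, hT]
    exact map_sum (PadicInt.Coe.ringHom) _ _
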